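/- For every real x ≥ 1 the series Σ_{n=0}^∞ S(√x; n) converges and its sum equals M(x) = Σ_{m ∈ ℕ, m ≤ √x} r₂(m)·(x − m²)^{1/2}. -/

import Mathlib

open Real

/-- `r₂(m)`: the number of representations of `m` as a sum of two squares of integers. -/
noncomputable def r2 (m : ℕ) : ℕ :=
  Set.ncard {p : ℤ × ℤ | p.1 ^ 2 + p.2 ^ 2 = (m : ℤ)}

/-- The coefficients `C₀ = √2` and `Cₙ = −(1/(√2·2ⁿ·n))·∏_{k=1}^{n−1}(1 − 1/(2k))` for `n ≥ 1`. -/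
noncomputable def Ccoef (n : ℕ) : ℝ :=
  if n = 0 then Real.sqrt 2
  else -(1 / (Real.sqrt 2 * 2 ^ n * n)) * ∏ k ∈ Finset.Icc 1 (n - 1), (1 - 1 / (2 * (k : ℝ)))

/-- `S(√x; n) = Cₙ·x^{1/4−n/2}·Σ_{m ∈ ℕ, m ≤ √x} r₂(m)·(√x − m)^{n+1/2}`. -/
noncomputable def Sxn (x : ℝ) (n : ℕ) : ℝ :=
  Ccoef n * x ^ ((1 : ℝ) / 4 - n / 2) *
    ∑ m ∈ Finset.range (⌊Real.sqrt x⌋₊ + 1),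
      (r2 m : ℝ) * (Real.sqrt x - m) ^ ((n : ℝ) + 1 / 2)

/-- `M(x) = Σ_{m ∈ ℕ, m ≤ √x} r₂(m)·(x − m²)^{1/2}`. -/
noncomputable def M (x : ℝ) : ℝ :=
  ∑ m ∈ Finset.range (⌊Real.sqrt x⌋₊ + 1),
    (r2 m : ℝ) * (x - (m : ℝ) ^ 2) ^ ((1 : ℝ) / 2)

noncomputable def cb (n : ℕ) : ℝ := Ccoef n * 2 ^ n * Real.sqrt 2 / 2

lemma sqrt2_sq : Real.sqrt 2 * Real.sqrt 2 = 2 := Real.mul_self_sqrt (by norm_num)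

lemma cb_zero : cb 0 = 1 := by
  simp only [cb, Ccoef, reduceIte, pow_zero, mul_one]
  nlinarith [sqrt2_sq]

lemma cb_succ (n : ℕ) :
    cb (n + 1) = -(1 / (2 * ((n : ℝ) + 1))) * ∏ k ∈ Finset.Icc 1 n, (1 - 1 / (2 * (k : ℝ))) := by
  have hs : Real.sqrt 2 ≠ 0 := by positivity
  have hn : ((n : ℝ) + 1) ≠ 0 := by positivity
  have h2 : ((2 : ℝ) ^ (n + 1)) ≠ 0 := by positivity
  simp only [cb, Ccoef, Nat.succ_ne_zero, if_false, Nat.add_sub_cancel, Nat.cast_add, Nat.cast_one]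
  field_simp

lemma cb_rec (n : ℕ) : cb (n + 1) = (2 * (n : ℝ) - 1) / (2 * ((n : ℝ) + 1)) * cb n := by
  cases n with
  | zero => rw [cb_succ, cb_zero]; norm_num
  | succ m =>
    rw [cb_succ, cb_succ]
    rw [Finset.prod_Icc_succ_top (Nat.le_add_left 1 m)]
    have hm1 : ((m : ℝ) + 1) ≠ 0 := by positivity
    have hm2 : ((m : ℝ) + 1 + 1) ≠ 0 := by positivity
    push_cast
    field_simp

lemma abs_cb_le (n : ℕ) : |cb n| ≤ 1 := by
  induction n with
  | zero => simp [cb_zero]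
  | succ m ih =>
    rw [cb_rec, abs_mul]
    have hm : (0:ℝ) ≤ (m:ℝ) := Nat.cast_nonneg m
    have h2 : (0:ℝ) < 2 * ((m:ℝ) + 1) := by positivity
    have hq : |(2 * (m:ℝ) - 1) / (2 * ((m:ℝ) + 1))| ≤ 1 := by
      rw [abs_div, abs_of_pos h2, div_le_one h2]
      exact abs_le.mpr ⟨by linarith, by linarith⟩
    calc |(2 * (m:ℝ) - 1) / (2 * ((m:ℝ) + 1))| * |cb m| ≤ 1 * 1 :=
          mul_le_mul hq ih (abs_nonneg _) one_pos.le
      _ = 1 := one_mul 1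

lemma summable_cb {z : ℝ} (hz : |z| < 1) : Summable fun n => cb n * z ^ n := by
  refine Summable.of_norm_bounded (summable_geometric_of_lt_one (abs_nonneg z) hz) fun n => ?_
  rw [norm_mul, norm_pow, Real.norm_eq_abs, Real.norm_eq_abs]
  calc |cb n| * |z| ^ n ≤ 1 * |z| ^ n :=
        mul_le_mul_of_nonneg_right (abs_cb_le n) (by positivity)
    _ = |z| ^ n := one_mul _

noncomputable def Fb (z : ℝ) : ℝ := ∑' n, cb n * z ^ n

noncomputable def u34 (n : ℕ) : ℝ := (n : ℝ) * (3/4) ^ (n - 1)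

lemma summable_u34 : Summable u34 := by
  have h : Summable (fun n : ℕ => (4/3) * ((n:ℝ) ^ 1 * (3/4:ℝ) ^ n)) :=
    (summable_pow_mul_geometric_of_norm_lt_one (R := ℝ) (r := 3/4) 1
      (by rw [Real.norm_eq_abs]; rw [abs_of_pos]; norm_num; norm_num)).mul_left _
  refine Summable.of_nonneg_of_le (fun n => ?_) (fun n => ?_) h
  · unfold u34; positivity
  · cases n with
    | zero => simp [u34]
    | succ m =>
      unfold u34
      rw [Nat.add_sub_cancel]
      refine le_of_eq ?_
      push_cast
      rw [pow_succ]
      ring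

lemma deriv_bound {n : ℕ} {z : ℝ} (hz : z ∈ Set.Ioo (-(3/4):ℝ) (3/4)) :
    ‖cb n * ((n:ℝ) * z ^ (n - 1))‖ ≤ u34 n := by
  have hza : |z| ≤ 3/4 := le_of_lt (abs_lt.mpr ⟨by linarith [hz.1], hz.2⟩)
  rw [norm_mul, norm_mul, Real.norm_eq_abs, Real.norm_eq_abs, norm_pow, Real.norm_eq_abs]
  unfold u34
  rw [Nat.abs_cast]
  calc |cb n| * ((n:ℝ) * |z| ^ (n-1)) ≤ 1 * ((n:ℝ) * (3/4) ^ (n-1)) := by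
        refine mul_le_mul (abs_cb_le n) ?_ (by positivity) one_pos.le
        exact mul_le_mul_of_nonneg_left (pow_le_pow_left₀ (abs_nonneg z) hza _) (Nat.cast_nonneg n)
    _ = (n:ℝ) * (3/4) ^ (n-1) := one_mul _

lemma hasDerivAt_Fb {y : ℝ} (hy : y ∈ Set.Ioo (-(3/4):ℝ) (3/4)) :
    HasDerivAt Fb (∑' n, cb n * ((n:ℝ) * y ^ (n - 1))) y := by
  refine hasDerivAt_tsum_of_isPreconnected summable_u34 isOpen_Ioo
    (isPreconnected_Ioo) (g := fun n z => cb n * z ^ n)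
    (g' := fun n z => cb n * ((n:ℝ) * z ^ (n - 1)))
    (fun n z _ => (hasDerivAt_pow n z).const_mul (cb n))
    (fun n z hzt => deriv_bound hzt) (y₀ := 0) (by norm_num) ?_ hy
  exact summable_cb (by norm_num)

lemma ode {y : ℝ} (hy : y ∈ Set.Ioo (-(3/4):ℝ) (3/4)) :
    2 * (1 - y) * (∑' n, cb n * ((n:ℝ) * y ^ (n - 1))) = -(Fb y) := by
  have hya : |y| < 1 := lt_trans (abs_lt.mpr ⟨by linarith [hy.1], hy.2⟩) (by norm_num)
  have hS : Summable (fun n => cb n * ((n:ℝ) * y ^ (n - 1))) :=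
    Summable.of_norm_bounded summable_u34 (fun n => deriv_bound hy)
  set D := ∑' n, cb n * ((n:ℝ) * y ^ (n - 1)) with hD
  have hDsum : HasSum (fun n => cb n * ((n:ℝ) * y ^ (n - 1))) D := hS.hasSum
  have hF : HasSum (fun n => cb n * y ^ n) (Fb y) := (summable_cb hya).hasSum
  -- shifted series
  have hA : HasSum (fun n : ℕ => 2 * (n:ℝ) * cb n * y ^ n - cb n * y ^ n) (2 * D) := by
    have h2 := (hasSum_nat_add_iff' (f := fun n => 2 * (cb n * ((n:ℝ) * y ^ (n - 1)))) 1).mpr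
      (hDsum.mul_left 2)
    simp only [Finset.range_one, Finset.sum_singleton, Nat.cast_zero, zero_mul, mul_zero,
      sub_zero, Nat.add_sub_cancel] at h2
    have he : (fun n : ℕ => 2 * (cb (n + 1) * (((n:ℕ) + 1 : ℝ) * y ^ n)))
        = fun n : ℕ => 2 * (n:ℝ) * cb n * y ^ n - cb n * y ^ n := by
      funext n
      rw [cb_rec n]
      have hn : 2 * ((n:ℝ) + 1) ≠ 0 := by positivity
      field_simp
    rw [← he]
    convert h2 using 2 with n
    · rfl
    push_cast
    ring
  have hB : HasSum (fun n : ℕ => 2 * (n:ℝ) * cb n * y ^ n) (2 * y * D) := by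
    have h2 := hDsum.mul_left (2 * y)
    have he : (fun n : ℕ => 2 * (n:ℝ) * cb n * y ^ n)
        = fun n => (2 * y) * (cb n * ((n:ℝ) * y ^ (n - 1))) := by
      funext n
      cases n with
      | zero => simp
      | succ m => rw [Nat.add_sub_cancel, pow_succ]; push_cast; ring
    rw [he]; exact h2
  have hC : HasSum (fun n : ℕ => cb n * y ^ n) (2 * y * D - 2 * D) := by
    have := hB.sub hA
    simpa using this
  have := hF.unique hC
  linarith

lemma Fb_zero : Fb 0 = 1 := by
  unfold Fb
  rw [tsum_eq_single 0 (fun n hn => by simp [zero_pow hn])]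
  simp [cb_zero]

lemma phi_deriv {y : ℝ} (hy : y ∈ Set.Ioo (-(3/4):ℝ) (3/4)) :
    HasDerivAt (fun t => Fb t ^ 2 * (1 - t)⁻¹) 0 y := by
  have h1y : (1 - y) ≠ 0 := by have := hy.2; intro h; simp only [Set.mem_Ioo] at hy; linarith [hy.2]
  have hF := hasDerivAt_Fb hy
  set D := ∑' n, cb n * ((n:ℝ) * y ^ (n - 1)) with hD
  have hode := ode hy
  have d1 : HasDerivAt (fun t => Fb t ^ 2) (2 * Fb y * D) y := by
    have := hF.fun_pow 2
    refine this.congr_deriv ?_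
    push_cast
    ring
  have d2 : HasDerivAt (fun t : ℝ => (1 - t)⁻¹) (((1 - y) ^ 2)⁻¹) y := by
    have hlin : HasDerivAt (fun t : ℝ => 1 - t) (-1) y := by
      simpa using (hasDerivAt_id y).const_sub 1
    have := hlin.fun_inv h1y
    refine this.congr_deriv ?_
    field_simp
  have := d1.fun_mul d2
  refine this.congr_deriv ?_
  have key : 2 * (1 - y) * D = -(Fb y) := hode
  field_simp
  linear_combination (Fb y) * key

lemma Fb_sq {z : ℝ} (h0 : 0 ≤ z) (h1 : z ≤ 1/2) : Fb z ^ 2 = 1 - z := by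
  have hsub : Set.Icc (0:ℝ) z ⊆ Set.Ioo (-(3/4):ℝ) (3/4) :=
    fun t ht => ⟨by simp only [Set.mem_Icc] at ht; linarith [ht.1],
      by simp only [Set.mem_Icc] at ht; linarith [ht.2]⟩
  have hcont : ContinuousOn (fun t => Fb t ^ 2 * (1 - t)⁻¹) (Set.Icc 0 z) :=
    fun t ht => ((phi_deriv (hsub ht)).continuousAt).continuousWithinAt
  have hconst := constant_of_has_deriv_right_zero hcont
    (fun t ht => ((phi_deriv (hsub ⟨ht.1, le_of_lt ht.2⟩)).hasDerivWithinAt))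
    z (Set.right_mem_Icc.mpr h0)
  simp only [Fb_zero, one_pow, sub_zero, inv_one, mul_one] at hconst
  have h1z : (1:ℝ) - z ≠ 0 := by intro h; linarith
  field_simp at hconst
  linarith

lemma Fb_pos {z : ℝ} (h0 : 0 ≤ z) (h1 : z ≤ 1/2) : 0 < Fb z := by
  have hne : ∀ t ∈ Set.Icc (0:ℝ) z, Fb t ≠ 0 := by
    intro t ht h0'
    have hsq := Fb_sq ht.1 (le_trans ht.2 h1)
    rw [h0'] at hsq
    simp only [Set.mem_Icc] at ht
    nlinarith [ht.2]
  have hsub : Set.Icc (0:ℝ) z ⊆ Set.Ioo (-(3/4):ℝ) (3/4) :=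
    fun t ht => ⟨by simp only [Set.mem_Icc] at ht; linarith [ht.1],
      by simp only [Set.mem_Icc] at ht; linarith [ht.2]⟩
  have hcont : ContinuousOn Fb (Set.Icc 0 z) :=
    fun t ht => ((hasDerivAt_Fb (hsub ht)).continuousAt).continuousWithinAt
  by_contra h
  push_neg at h
  have hFz : Fb z < 0 := lt_of_le_of_ne h (hne z (Set.right_mem_Icc.mpr h0))
  have hiv := intermediate_value_Icc' h0 hcont
  have h0mem : (0:ℝ) ∈ Set.Icc (Fb z) (Fb 0) := by
    rw [Fb_zero]; exact ⟨le_of_lt hFz, by norm_num⟩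
  obtain ⟨t, ht, hft⟩ := hiv h0mem
  exact hne t ht hft

lemma hasSum_cb_sqrt {z : ℝ} (h0 : 0 ≤ z) (h1 : z ≤ 1/2) :
    HasSum (fun n => cb n * z ^ n) (Real.sqrt (1 - z)) := by
  have hs := (summable_cb (z := z) (by rw [abs_of_nonneg h0]; linarith)).hasSum
  have heq : Real.sqrt (1 - z) = Fb z := by
    rw [← Fb_sq h0 h1, Real.sqrt_sq (le_of_lt (Fb_pos h0 h1))]
  rwa [heq]

lemma Ccoef_eq_cb (n : ℕ) : Ccoef n = Real.sqrt 2 * cb n / 2 ^ n := by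
  have hs : Real.sqrt 2 ≠ 0 := by positivity
  have h2 : ((2:ℝ) ^ n) ≠ 0 := by positivity
  unfold cb
  field_simp
  linear_combination (-Ccoef n) * sqrt2_sq

lemma key_m (x : ℝ) (hx : 1 ≤ x) (m : ℕ) (hm : (m:ℝ) ≤ Real.sqrt x) :
    HasSum (fun n : ℕ => Ccoef n * x ^ ((1:ℝ)/4 - n/2) * (Real.sqrt x - m) ^ ((n:ℝ) + 1/2))
      ((x - (m:ℝ)^2) ^ ((1:ℝ)/2)) := by
  have hx0 : (0:ℝ) < x := by linarith
  set u := Real.sqrt x with hu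
  have hu1 : (1:ℝ) ≤ u := by
    rw [hu, show (1:ℝ) = Real.sqrt 1 from Real.sqrt_one.symm]
    exact Real.sqrt_le_sqrt hx
  have hu0 : (0:ℝ) < u := by linarith
  have hm0 : (0:ℝ) ≤ (m:ℝ) := Nat.cast_nonneg m
  set t := u - (m:ℝ) with htdef
  have ht0 : (0:ℝ) ≤ t := by rw [htdef]; linarith
  set z := t / (2 * u) with hzdef
  have hz0 : 0 ≤ z := div_nonneg ht0 (by linarith)
  have hz1 : z ≤ 1/2 := by
    rw [hzdef, div_le_iff₀ (by linarith : (0:ℝ) < 2 * u)]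
    rw [htdef]; linarith
  have hmain := (hasSum_cb_sqrt hz0 hz1).mul_left
    (Real.sqrt 2 * x ^ ((1:ℝ)/4) * t ^ ((1:ℝ)/2))
  have hxq : x ^ ((1:ℝ)/4) = Real.sqrt u := by
    rw [show ((1:ℝ)/4) = (1/2 : ℝ) * (1/2) by norm_num, Real.rpow_mul hx0.le,
      ← Real.sqrt_eq_rpow, ← Real.sqrt_eq_rpow, hu]
  have hterm : ∀ n : ℕ,
      Real.sqrt 2 * x ^ ((1:ℝ)/4) * t ^ ((1:ℝ)/2) * (cb n * z ^ n)
        = Ccoef n * x ^ ((1:ℝ)/4 - (n:ℝ)/2) * t ^ ((n:ℝ) + 1/2) := by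
    intro n
    have e1 : x ^ ((1:ℝ)/4 - (n:ℝ)/2) = x ^ ((1:ℝ)/4) / x ^ ((n:ℝ)/2) :=
      Real.rpow_sub hx0 _ _
    have e2 : x ^ ((n:ℝ)/2) = u ^ n := by
      rw [show ((n:ℝ)/2) = (1/2 : ℝ) * (n:ℝ) by ring, Real.rpow_mul hx0.le,
        ← Real.sqrt_eq_rpow, ← hu, Real.rpow_natCast]
    have e3 : t ^ ((n:ℝ) + 1/2) = t ^ n * t ^ ((1:ℝ)/2) := by
      rw [Real.rpow_add' ht0 (by positivity), Real.rpow_natCast]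
    have e4 : z ^ n = t ^ n / (2 ^ n * u ^ n) := by
      rw [hzdef, div_pow, mul_pow]
    rw [e1, e2, e3, e4, Ccoef_eq_cb]
    have h2n : ((2:ℝ) ^ n) ≠ 0 := by positivity
    have hun : (u ^ n) ≠ 0 := by positivity
    field_simp
  have htot : Real.sqrt 2 * x ^ ((1:ℝ)/4) * t ^ ((1:ℝ)/2) * Real.sqrt (1 - z)
      = (x - (m:ℝ)^2) ^ ((1:ℝ)/2) := by
    have h1z : 1 - z = (u + (m:ℝ)) / (2 * u) := by
      rw [hzdef, htdef]
      field_simp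
      ring
    rw [h1z, hxq, ← Real.sqrt_eq_rpow, ← Real.sqrt_eq_rpow,
      ← Real.sqrt_mul (by norm_num : (0:ℝ) ≤ 2) u,
      ← Real.sqrt_mul (by positivity : (0:ℝ) ≤ 2 * u) t,
      ← Real.sqrt_mul (by positivity : (0:ℝ) ≤ 2 * u * t)]
    congr 1
    have hx' : u ^ 2 = x := Real.sq_sqrt hx0.le
    rw [htdef]
    field_simp
    linear_combination hx'
  have hfun : (fun n : ℕ => Ccoef n * x ^ ((1:ℝ)/4 - (n:ℝ)/2) * t ^ ((n:ℝ) + 1/2))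
      = fun n : ℕ => Real.sqrt 2 * x ^ ((1:ℝ)/4) * t ^ ((1:ℝ)/2) * (cb n * z ^ n) :=
    funext fun n => (hterm n).symm
  rw [hfun, ← htot]
  exact hmain

/-- For every `x ≥ 1` the series `Σ_{n=0}^∞ S(√x; n)` converges with sum `M(x)`. -/
theorem hasSum_Sxn_M (x : ℝ) (hx : 1 ≤ x) :
    HasSum (fun n : ℕ => Sxn x n) (M x) := by
  have hkey : ∀ m ∈ Finset.range (⌊Real.sqrt x⌋₊ + 1),
      HasSum (fun n : ℕ => Ccoef n * x ^ ((1:ℝ)/4 - n/2) *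
          ((r2 m : ℝ) * (Real.sqrt x - m) ^ ((n:ℝ) + 1/2)))
        ((r2 m : ℝ) * (x - (m:ℝ)^2) ^ ((1:ℝ)/2)) := by
    intro m hm
    have hm' : (m:ℝ) ≤ Real.sqrt x := by
      have h1 : m ≤ ⌊Real.sqrt x⌋₊ := Nat.lt_succ_iff.mp (Finset.mem_range.mp hm)
      calc (m:ℝ) ≤ (⌊Real.sqrt x⌋₊ : ℝ) := Nat.cast_le.mpr h1
        _ ≤ Real.sqrt x := Nat.floor_le (Real.sqrt_nonneg x)
    have h := (key_m x hx m hm').mul_left (r2 m : ℝ)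
    have he : (fun n : ℕ => Ccoef n * x ^ ((1:ℝ)/4 - n/2) *
          ((r2 m : ℝ) * (Real.sqrt x - m) ^ ((n:ℝ) + 1/2)))
        = fun n : ℕ => (r2 m : ℝ) *
            (Ccoef n * x ^ ((1:ℝ)/4 - n/2) * (Real.sqrt x - m) ^ ((n:ℝ) + 1/2)) := by
      funext n; ring
    rw [he]; exact h
  have h := hasSum_sum hkey
  have he2 : (fun n : ℕ => Sxn x n) = fun n : ℕ => ∑ m ∈ Finset.range (⌊Real.sqrt x⌋₊ + 1),
      Ccoef n * x ^ ((1:ℝ)/4 - n/2) * ((r2 m : ℝ) * (Real.sqrt x - m) ^ ((n:ℝ) + 1/2)) := by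
    funext n; unfold Sxn; rw [Finset.mul_sum]
  rw [he2]
  unfold M
  exact h
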